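/- Let t ≥ 2 and let w ∈ T^Q with d(w, s) ≤ k for some (M,r)-balanced s ∈ T^Q, and let u be a lie string of length j. Then |{w' : w →^u w'}| ≤ C(M+j−1, j)·((1/t)⌈Q/M⌉ + r + k)^j. -/

import Mathlib

/-- `Applies u w w'` : the lie string `u = (a₁,b₁)⋯(a_j,b_j)` can be applied to `w`
to obtain `w'`; that is, there are positions `i₁ < ⋯ < i_j` with `w` carrying letter
`a_ℓ` and `w'` carrying letter `b_ℓ` at position `i_ℓ`, and `w`, `w'` agree elsewhere. -/
def Applies {t Q : ℕ} (u : List (Fin t × Fin t)) (w w' : Fin Q → Fin t) : Prop :=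
  ∃ pos : Fin u.length → Fin Q, StrictMono pos ∧
    (∀ ℓ : Fin u.length, w (pos ℓ) = (u.get ℓ).1 ∧ w' (pos ℓ) = (u.get ℓ).2) ∧
    (∀ p : Fin Q, (∀ ℓ, pos ℓ ≠ p) → w p = w' p)

/-- The section (of `M` contiguous sections of `{0,…,Q-1}`, the first `Q mod M` of
length `⌈Q/M⌉` and the rest of length `⌊Q/M⌋`) containing position `p`. -/
def sectionOf (Q M p : ℕ) : ℕ :=
  if p < (Q % M) * (Q / M + 1) then p / (Q / M + 1)
  else Q % M + (p - (Q % M) * (Q / M + 1)) / (Q / M)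

lemma sectionOf_lt {Q M : ℕ} (hM : 0 < M) {p : ℕ} (hp : p < Q) : sectionOf Q M p < M := by
  unfold sectionOf
  set d := Q / M with hd
  set m := Q % M with hm
  have hmM : m < M := Nat.mod_lt _ hM
  have hQ : M * d + m = Q := by
    rw [hd, hm, Nat.mul_comm M (Q / M)]; exact Nat.div_add_mod' Q M
  split_ifs with h
  · calc p / (d + 1) < m := by
          rw [Nat.div_lt_iff_lt_mul (Nat.succ_pos d)]; exact h
       _ < M := hmM
  · push_neg at h
    have hd0 : 0 < d := by
      rcases Nat.eq_zero_or_pos d with h0 | h0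
      · exfalso; simp [h0] at hQ h; omega
      · exact h0
    have hsub : (M - m) * d = M * d - m * d := Nat.sub_mul M m d
    have hmd : m * d ≤ M * d := Nat.mul_le_mul_right d hmM.le
    have hexp : m * (d + 1) = m * d + m := by ring
    have key : (p - m * (d + 1)) / d < M - m := by
      rw [Nat.div_lt_iff_lt_mul hd0]
      omega
    omega

lemma sectionOf_mono {Q M : ℕ} : Monotone (sectionOf Q M) := by
  intro p q hpq
  unfold sectionOf
  set d := Q / M with hd
  set m := Q % M with hm
  split_ifs with h1 h2 h2
  · exact Nat.div_le_div_right hpq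
  · have h3 : p / (d + 1) < m := by rw [Nat.div_lt_iff_lt_mul (Nat.succ_pos d)]; exact h1
    exact le_trans h3.le (Nat.le_add_right _ _)
  · omega
  · exact Nat.add_le_add_left (Nat.div_le_div_right (Nat.sub_le_sub_right hpq _)) m

lemma card_monotone_le (n M : ℕ) :
    ((Finset.univ : Finset (Fin n → Fin M)).filter (fun g => Monotone g)).card
      ≤ (M + n - 1).choose n := by
  classical
  have key : ∀ g : Fin n → Fin M, Monotone g →
      StrictMono (fun ℓ : Fin n => (g ℓ : ℕ) + (ℓ : ℕ)) := by
    intro g hmono a b hab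
    show (g a : ℕ) + (a : ℕ) < (g b : ℕ) + (b : ℕ)
    have h1 : (g a : ℕ) ≤ g b := hmono hab.le
    have h2 : (a : ℕ) < b := hab
    omega
  have h := Finset.card_le_card_of_injOn
    (f := fun g : Fin n → Fin M => Finset.image (fun ℓ : Fin n => (g ℓ : ℕ) + (ℓ : ℕ)) Finset.univ)
    (s := (Finset.univ : Finset (Fin n → Fin M)).filter (fun g => Monotone g))
    (t := (Finset.range (M + n - 1)).powersetCard n)
    ?_ ?_
  · simpa [Finset.card_powersetCard, Finset.card_range] using h
  · intro g hg
    rw [Finset.mem_coe, Finset.mem_filter] at hg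
    rw [Finset.mem_coe, Finset.mem_powersetCard]
    constructor
    · intro x hx
      simp only [Finset.mem_image, Finset.mem_univ, true_and] at hx
      obtain ⟨ℓ, rfl⟩ := hx
      rw [Finset.mem_range]
      have h1 : (g ℓ : ℕ) < M := (g ℓ).isLt
      have h2 : (ℓ : ℕ) < n := ℓ.isLt
      omega
    · rw [Finset.card_image_of_injective _ (key g hg.2).injective, Finset.card_univ,
        Fintype.card_fin]
  · intro g hg g' hg' heq
    rw [Finset.mem_coe, Finset.mem_filter] at hg hg'
    simp only at heq
    have hsm := key g hg.2
    have hsm' := key g' hg'.2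
    have hrange : Set.range (fun ℓ : Fin n => (g ℓ : ℕ) + (ℓ : ℕ))
        = Set.range (fun ℓ : Fin n => (g' ℓ : ℕ) + (ℓ : ℕ)) := by
      rw [← Set.image_univ, ← Set.image_univ, ← Finset.coe_univ, ← Finset.coe_image,
        ← Finset.coe_image, heq]
    haveI : WellFoundedLT (Fin n) := Finite.to_wellFoundedLT
    have := (hsm.range_inj hsm').mp hrange
    funext ℓ
    have h1 : (g ℓ : ℕ) + (ℓ : ℕ) = (g' ℓ : ℕ) + (ℓ : ℕ) := congrFun this ℓ
    exact Fin.ext (by omega)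

/-- if `w` is within Hamming distance `k` of some `(M,r)`-balanced
`s ∈ T^Q` and `u` is a lie string of length `j`, then
`|{w' : w →ᵘ w'}| ≤ C(M+j−1, j)·((1/t)⌈Q/M⌉ + r + k)^j`.
Note `(Q+M-1)/M = ⌈Q/M⌉` for `M > 0`. -/
theorem shadow_upper_balanced (t Q M k j : ℕ) (ht : 2 ≤ t) (hM : 0 < M)
    (r : ℝ) (hr : 0 ≤ r) (w s : Fin Q → Fin t)
    (hbal : ∀ m < M, ∀ a : Fin t,
      (Set.ncard {p : Fin Q | sectionOf Q M p = m ∧ s p = a} : ℝ)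
        ≤ (((Q + M - 1) / M : ℕ) : ℝ) / t + r)
    (hd : hammingDist w s ≤ k)
    (u : List (Fin t × Fin t)) (hlie : ∀ p ∈ u, p.1 ≠ p.2) (hj : u.length = j) :
    (Set.ncard {w' : Fin Q → Fin t | Applies u w w'} : ℝ)
      ≤ (Nat.choose (M + j - 1) j : ℝ)
          * ((((Q + M - 1) / M : ℕ) : ℝ) / t + r + k) ^ j := by
  classical
  subst hj
  set n := u.length with hn
  set B : ℝ := (((Q + M - 1) / M : ℕ) : ℝ) / t + r + (k : ℝ) with hB
  have ht0 : (0 : ℝ) < t := by positivity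
  have hB0 : 0 ≤ B := by
    rw [hB]
    have : (0:ℝ) ≤ (((Q + M - 1) / M : ℕ) : ℝ) / t := by positivity
    have hk : (0:ℝ) ≤ (k : ℝ) := Nat.cast_nonneg k
    linarith
  -- Step A : per-section per-letter count in w
  have hcount : ∀ mm : ℕ, mm < M → ∀ a : Fin t,
      ((Finset.univ.filter (fun p : Fin Q => sectionOf Q M (p : ℕ) = mm ∧ w p = a)).card : ℝ)
        ≤ B := by
    intro mm hmm a
    have hsubset : Finset.univ.filter (fun p : Fin Q => sectionOf Q M (p : ℕ) = mm ∧ w p = a)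
        ⊆ (Finset.univ.filter (fun p : Fin Q => sectionOf Q M (p : ℕ) = mm ∧ s p = a))
          ∪ (Finset.univ.filter (fun p : Fin Q => w p ≠ s p)) := by
      intro p hp
      rw [Finset.mem_filter] at hp
      rw [Finset.mem_union, Finset.mem_filter, Finset.mem_filter]
      by_cases hws : w p = s p
      · exact Or.inl ⟨Finset.mem_univ _, hp.2.1, hws ▸ hp.2.2⟩
      · exact Or.inr ⟨Finset.mem_univ _, hws⟩
    have h1 : ((Finset.univ.filter
        (fun p : Fin Q => sectionOf Q M (p : ℕ) = mm ∧ s p = a)).card : ℝ)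
        ≤ (((Q + M - 1) / M : ℕ) : ℝ) / t + r := by
      have := hbal mm hmm a
      rwa [Set.ncard_eq_toFinset_card', Set.toFinset_setOf] at this
    have h2 : (Finset.univ.filter (fun p : Fin Q => w p ≠ s p)).card ≤ k := hd
    have h3 := Finset.card_le_card hsubset
    have h4 := Finset.card_union_le
      (Finset.univ.filter (fun p : Fin Q => sectionOf Q M (p : ℕ) = mm ∧ s p = a))
      (Finset.univ.filter (fun p : Fin Q => w p ≠ s p))
    have h5 : ((Finset.univ.filter
        (fun p : Fin Q => sectionOf Q M (p : ℕ) = mm ∧ w p = a)).card : ℝ)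
        ≤ ((Finset.univ.filter
            (fun p : Fin Q => sectionOf Q M (p : ℕ) = mm ∧ s p = a)).card : ℝ)
          + ((Finset.univ.filter (fun p : Fin Q => w p ≠ s p)).card : ℝ) := by
      push_cast
      exact_mod_cast le_trans (Nat.cast_le.mpr h3) (by exact_mod_cast h4)
    have h6 : ((Finset.univ.filter (fun p : Fin Q => w p ≠ s p)).card : ℝ) ≤ k :=
      Nat.cast_le.mpr h2
    rw [hB]; linarith
  -- Step B : shadow is image of valid position functions
  set T : Finset (Fin n → Fin Q) :=
    Finset.univ.filter (fun pos => StrictMono pos ∧ ∀ ℓ, w (pos ℓ) = (u.get ℓ).1) with hT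
  set F : (Fin n → Fin Q) → (Fin Q → Fin t) :=
    fun pos p => if h : ∃ ℓ, pos ℓ = p then (u.get h.choose).2 else w p with hF
  have hshadow : {w' : Fin Q → Fin t | Applies u w w'} ⊆ F '' (T : Set (Fin n → Fin Q)) := by
    intro w' hw'
    obtain ⟨pos, hmono, hmatch, hag⟩ := hw'
    refine ⟨pos, ?_, ?_⟩
    · rw [Finset.mem_coe, hT, Finset.mem_filter]
      exact ⟨Finset.mem_univ _, hmono, fun ℓ => (hmatch ℓ).1⟩
    · funext p
      rw [hF]
      by_cases h : ∃ ℓ, pos ℓ = p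
      · beta_reduce; rw [dif_pos h]
        have hc : pos h.choose = p := h.choose_spec
        have h2 := (hmatch h.choose).2
        rw [hc] at h2
        exact h2.symm
      · beta_reduce; rw [dif_neg h]
        push_neg at h
        exact hag p h
  have hstep1 : (Set.ncard {w' : Fin Q → Fin t | Applies u w w'} : ℝ) ≤ (T.card : ℝ) := by
    have e1 : Set.ncard {w' : Fin Q → Fin t | Applies u w w'}
        ≤ Set.ncard (F '' (T : Set (Fin n → Fin Q))) :=
      Set.ncard_le_ncard hshadow (Set.toFinite _)
    have e2 : Set.ncard (F '' (T : Set (Fin n → Fin Q)))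
        ≤ Set.ncard (T : Set (Fin n → Fin Q)) := Set.ncard_image_le (Set.toFinite _)
    have e3 : Set.ncard (T : Set (Fin n → Fin Q)) = T.card := Set.ncard_coe_finset T
    exact_mod_cast le_trans e1 (e2.trans_eq e3)
  -- Step C : count T fiberwise over section profiles
  set secF : Fin Q → Fin M := fun p => ⟨sectionOf Q M (p : ℕ), sectionOf_lt hM p.isLt⟩ with hsecF
  set G : (Fin n → Fin Q) → (Fin n → Fin M) := fun pos ℓ => secF (pos ℓ) with hG
  have hfib : T.card = ∑ g ∈ T.image G, (T.filter (fun x => G x = g)).card :=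
    Finset.card_eq_sum_card_fiberwise (fun x hx => Finset.mem_image_of_mem G hx)
  have hfiber_le : ∀ g ∈ T.image G, ((T.filter (fun x => G x = g)).card : ℝ) ≤ B ^ n := by
    intro g hg
    have hsub : T.filter (fun x => G x = g) ⊆ Fintype.piFinset
        (fun ℓ : Fin n => Finset.univ.filter
          (fun p : Fin Q => sectionOf Q M (p : ℕ) = ((g ℓ : ℕ)) ∧ w p = (u.get ℓ).1)) := by
      intro x hx
      rw [Finset.mem_filter] at hx
      obtain ⟨hxT, hxg⟩ := hx
      rw [hT, Finset.mem_filter] at hxT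
      rw [Fintype.mem_piFinset]
      intro ℓ
      rw [Finset.mem_filter]
      refine ⟨Finset.mem_univ _, ?_, hxT.2.2 ℓ⟩
      have := congrFun hxg ℓ
      rw [hG] at this
      simpa [hsecF] using congrArg Fin.val this
    have hc1 : (T.filter (fun x => G x = g)).card ≤ ∏ ℓ : Fin n,
        (Finset.univ.filter
          (fun p : Fin Q => sectionOf Q M (p : ℕ) = ((g ℓ : ℕ)) ∧ w p = (u.get ℓ).1)).card := by
      have := Finset.card_le_card hsub
      rwa [Fintype.card_piFinset] at this
    calc ((T.filter (fun x => G x = g)).card : ℝ)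
        ≤ ∏ ℓ : Fin n, ((Finset.univ.filter
            (fun p : Fin Q => sectionOf Q M (p : ℕ) = ((g ℓ : ℕ)) ∧ w p = (u.get ℓ).1)).card : ℝ) := by
          exact_mod_cast hc1
      _ ≤ ∏ ℓ : Fin n, B := by
          apply Finset.prod_le_prod
          · intro ℓ _; positivity
          · intro ℓ _; exact hcount (g ℓ : ℕ) (g ℓ).isLt (u.get ℓ).1
      _ = B ^ n := by rw [Finset.prod_const, Finset.card_univ, Fintype.card_fin]
  have himage : (T.image G).card ≤ (M + n - 1).choose n := by
    have hsub : T.image G ⊆ Finset.univ.filter (fun g : Fin n → Fin M => Monotone g) := by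
      intro g hg
      rw [Finset.mem_image] at hg
      obtain ⟨pos, hpos, rfl⟩ := hg
      rw [hT, Finset.mem_filter] at hpos
      rw [Finset.mem_filter]
      refine ⟨Finset.mem_univ _, ?_⟩
      intro a b hab
      show (secF (pos a) : ℕ) ≤ (secF (pos b) : ℕ)
      rw [hsecF]
      exact sectionOf_mono (by exact_mod_cast hpos.2.1.monotone hab)
    exact le_trans (Finset.card_le_card hsub) (card_monotone_le n M)
  -- assemble
  have hstep2 : (T.card : ℝ) ≤ ((M + n - 1).choose n : ℝ) * B ^ n := by
    rw [hfib]
    push_cast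
    calc (∑ g ∈ T.image G, ((T.filter (fun x => G x = g)).card : ℝ))
        ≤ ∑ g ∈ T.image G, B ^ n := Finset.sum_le_sum hfiber_le
      _ = (T.image G).card * B ^ n := by rw [Finset.sum_const, nsmul_eq_mul]
      _ ≤ ((M + n - 1).choose n : ℝ) * B ^ n := by
          apply mul_le_mul_of_nonneg_right _ (by positivity)
          exact_mod_cast himage
  exact le_trans hstep1 hstep2
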